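/- (Theorem 1, recursive feasibility, constraint satisfaction and stability) Under Assumptions 1 and 2 with ρ > 0 and γ := C/(1−ρ) > 1, let V̄ > 0, M ≥ 1, and let N > N_M with N_M as in the decrease result, so that ε_{N,M} := 1 − C²ρ_γ^{N−N₀}ρ^M/(1−ρ^M) > 0. Consider the closed loop x(t+1) = f(x(t), u*(0|t)) where u*(·|t) is a minimizing input sequence for V_{N,M}(x(t)). Then for every initial condition x₀ ∈ X_V̄ := {x : V_{N,M}(x) ≤ V̄}: (i) the MPC problem is feasible at every time t ≥ 0 and x(t) ∈ X_V̄ for all t; (ii) the closed loop satisfies the constraints (x(t), u(t)) ∈ Z for all t; (iii) V_{N,M}(x(t)) is nonincreasing in t; and (iv) the origin is asymptotically stable: x(t) → 0 as t → ∞, and ‖x(t)‖ ≤ α̲^{-1}(γ_V̄ · ᾱ(‖x₀‖)) for all t, where γ_V̄ := max{γ, V̄/ε}. -/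

import Mathlib

open Finset Filter
open scoped ENNReal

noncomputable section

open scoped Classical

/-- State/input spaces are Euclidean spaces. -/
abbrev Vec (n : ℕ) := EuclideanSpace ℝ (Fin n)

/-- Open-loop state trajectory: `x(0) = x`, `x(k+1) = f(x(k), u(k))`. -/
def traj {n m : ℕ} (f : Vec n → Vec m → Vec n) (x : Vec n) (u : ℕ → Vec m) : ℕ → Vec n
  | 0 => x
  | k + 1 => f (traj f x u k) (u k)

/-- Closed-loop state trajectory under the feedback `κ` (the map `φ_x(·, x)`). -/
def phiX {n m : ℕ} (f : Vec n → Vec m → Vec n) (κ : Vec n → Vec m) (x : Vec n) : ℕ → Vec n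
  | 0 => x
  | k + 1 => f (phiX f κ x k) (κ (phiX f κ x k))

/-- `ℓ_min(x) := inf_{u ∈ U} ℓ(x, u)`. -/
def lmin {n m : ℕ} (ℓ : Vec n → Vec m → ℝ) (Uset : Set (Vec m)) (x : Vec n) : ℝ :=
  sInf ((fun u => ℓ x u) '' Uset)

/-- Finite-tail cost `V_{f,M}(x)`: sum of the stage cost along the κ-closed loop if the
constraints are satisfied along the tail, and `+∞` otherwise (for `M = 0` it equals `0`). -/
def Vtail {n m : ℕ} (f : Vec n → Vec m → Vec n) (κ : Vec n → Vec m)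
    (ℓ : Vec n → Vec m → ℝ) (Z : Set (Vec n × Vec m)) (M : ℕ) (x : Vec n) : ℝ≥0∞ :=
  if ∀ k < M, (phiX f κ x k, κ (phiX f κ x k)) ∈ Z then
    ENNReal.ofReal (∑ k ∈ Finset.range M, ℓ (phiX f κ x k) (κ (phiX f κ x k)))
  else ⊤

/-- Feasibility of the input sequence `u` over horizon `N` from state `x`. -/
def Feasible {n m : ℕ} (f : Vec n → Vec m → Vec n) (Z : Set (Vec n × Vec m))
    (Uset : Set (Vec m)) (N : ℕ) (x : Vec n) (u : ℕ → Vec m) : Prop :=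
  ∀ k < N, u k ∈ Uset ∧ (traj f x u k, u k) ∈ Z

/-- MPC open-loop cost `J_{N,M}` of the input sequence `u` from state `x`. -/
def Jcost {n m : ℕ} (f : Vec n → Vec m → Vec n) (κ : Vec n → Vec m)
    (ℓ : Vec n → Vec m → ℝ) (Z : Set (Vec n × Vec m)) (N M : ℕ) (x : Vec n)
    (u : ℕ → Vec m) : ℝ≥0∞ :=
  ENNReal.ofReal (∑ k ∈ Finset.range N, ℓ (traj f x u k) (u k)) +
    Vtail f κ ℓ Z M (traj f x u N)

/-- MPC value function `V_{N,M}(x)` (equal to `+∞` if the problem is infeasible). -/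
def Vmpc {n m : ℕ} (f : Vec n → Vec m → Vec n) (κ : Vec n → Vec m)
    (ℓ : Vec n → Vec m → ℝ) (Z : Set (Vec n × Vec m)) (Uset : Set (Vec m))
    (N M : ℕ) (x : Vec n) : ℝ≥0∞ :=
  ⨅ (u : ℕ → Vec m) (_ : Feasible f Z Uset N x u), Jcost f κ ℓ Z N M x u

/-- `u` is a minimizing (optimal) input sequence for `V_{N,M}(x)`. -/
def IsMinimizer {n m : ℕ} (f : Vec n → Vec m → Vec n) (κ : Vec n → Vec m)
    (ℓ : Vec n → Vec m → ℝ) (Z : Set (Vec n × Vec m)) (Uset : Set (Vec m))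
    (N M : ℕ) (x : Vec n) (u : ℕ → Vec m) : Prop :=
  Feasible f Z Uset N x u ∧ Vmpc f κ ℓ Z Uset N M x = Jcost f κ ℓ Z N M x u

/-- Infinite-horizon optimal cost `V_{∞,0}(x)`. -/
def Vinf {n m : ℕ} (f : Vec n → Vec m → Vec n) (ℓ : Vec n → Vec m → ℝ)
    (Z : Set (Vec n × Vec m)) (Uset : Set (Vec m)) (x : Vec n) : ℝ≥0∞ :=
  ⨅ (u : ℕ → Vec m) (_ : ∀ k, u k ∈ Uset ∧ (traj f x u k, u k) ∈ Z),
    ∑' k : ℕ, ENNReal.ofReal (ℓ (traj f x u k) (u k))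

/-- Assumption 2 (locally stabilizing controller): exponential decay of the stage
cost along the κ-closed loop and constraint satisfaction, locally (`ℓ_min(x) ≤ ε`). -/
def Assumption2 {n m : ℕ} (f : Vec n → Vec m → Vec n) (κ : Vec n → Vec m)
    (ℓ : Vec n → Vec m → ℝ) (Z : Set (Vec n × Vec m)) (Uset : Set (Vec m))
    (ρ C ε : ℝ) : Prop :=
  ρ ∈ Set.Ico (0 : ℝ) 1 ∧ 1 ≤ C ∧ 0 < ε ∧
    ∀ x : Vec n, lmin ℓ Uset x ≤ ε → ∀ k : ℕ,
      ℓ (phiX f κ x k) (κ (phiX f κ x k)) ≤ C * ρ ^ k * lmin ℓ Uset x ∧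
      (phiX f κ x k, κ (phiX f κ x k)) ∈ Z

/-- A class-`K∞` function: continuous, strictly increasing and unbounded on `[0,∞)`
with `α(0) = 0`. -/
def IsKInfty (α : ℝ → ℝ) : Prop :=
  ContinuousOn α (Set.Ici 0) ∧ StrictMonoOn α (Set.Ici 0) ∧ α 0 = 0 ∧
    Tendsto α atTop atTop

lemma phiX_add {n m : ℕ} (f : Vec n → Vec m → Vec n) (κ : Vec n → Vec m) (y : Vec n)
    (a b : ℕ) : phiX f κ y (a + b) = phiX f κ (phiX f κ y a) b := by
  induction b with
  | zero => rfl
  | succ i ih =>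
    show phiX f κ y ((a + i) + 1) = _
    simp only [phiX, ih]

set_option maxHeartbeats 2000000

/-- Theorem 1: recursive feasibility, constraint satisfaction and
stability: under Assumptions 1 and 2 with `ρ > 0`, `γ = C/(1-ρ) > 1`, for `N > N_M`
(so `ε_{N,M} > 0`), every closed loop `x(t+1) = f(x(t), u*(0|t))` generated by
minimizing input sequences starting from `x₀` with `V_{N,M}(x₀) ≤ V̄` satisfies:
(i) feasibility `V_{N,M}(x(t)) < ∞` and `x(t) ∈ X_V̄` for all `t`; (ii) the closed-loop
constraints `(x(t), u(t)) ∈ Z`; (iii) `V_{N,M}(x(t))` is nonincreasing; and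
(iv) asymptotic stability: `x(t) → 0` and `α̲(‖x(t)‖) ≤ γ_V̄ ᾱ(‖x₀‖)` for all `t`. -/

theorem closed_loop_stability {n m : ℕ}
    (f : Vec n → Vec m → Vec n) (κ : Vec n → Vec m) (ℓ : Vec n → Vec m → ℝ)
    (Z : Set (Vec n × Vec m)) (Uset : Set (Vec m)) (ρ C ε : ℝ)
    (hf : Continuous fun p : Vec n × Vec m => f p.1 p.2) (hf0 : f 0 0 = 0)
    (hℓ : Continuous fun p : Vec n × Vec m => ℓ p.1 p.2) (hℓ0 : ∀ x u, 0 ≤ ℓ x u)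
    (hZ0 : ((0 : Vec n), (0 : Vec m)) ∈ interior Z) (hU : IsCompact Uset)
    (hκ : Continuous κ) (hκU : ∀ x, κ x ∈ Uset)
    (αlow αup : ℝ → ℝ) (hαlow : IsKInfty αlow) (hαup : IsKInfty αup)
    (hA1 : ∀ x : Vec n, αlow ‖x‖ ≤ lmin ℓ Uset x ∧ lmin ℓ Uset x ≤ αup ‖x‖)
    (hℓ00 : ℓ 0 0 = 0)
    (hA2 : Assumption2 f κ ℓ Z Uset ρ C ε) (hρpos : 0 < ρ)
    (Vbar γ ργ γlow NM : ℝ) (hVbar : 0 < Vbar) (hγ : γ = C / (1 - ρ)) (hγ1 : 1 < γ)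
    (hργ : ργ = (γ - 1) / γ) (hγlow : γlow = min γ (Vbar / ε))
    (N₀ : ℕ) (hN₀ : N₀ = ⌈max 0 ((Vbar - γ * ε) / ε)⌉₊)
    (M : ℕ) (hM : 1 ≤ M)
    (hNM : NM = N₀ + max (Real.log γlow)
        (max (Real.log (C ^ 2 * ρ ^ M / (1 - ρ ^ M))) 0) /
        (Real.log γ - Real.log (γ - 1)))
    (N : ℕ) (hN : NM < N)
    (x₀ : Vec n) (hx₀ : Vmpc f κ ℓ Z Uset N M x₀ ≤ ENNReal.ofReal Vbar)
    (xcl : ℕ → Vec n) (ustar : ℕ → ℕ → Vec m) (hinit : xcl 0 = x₀)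
    (hopt : ∀ t, IsMinimizer f κ ℓ Z Uset N M (xcl t) (ustar t))
    (hstep : ∀ t, xcl (t + 1) = f (xcl t) (ustar t 0)) :
    (∀ t, Vmpc f κ ℓ Z Uset N M (xcl t) < ⊤ ∧
        Vmpc f κ ℓ Z Uset N M (xcl t) ≤ ENNReal.ofReal Vbar) ∧
    (∀ t, (xcl t, ustar t 0) ∈ Z) ∧
    (Antitone fun t => Vmpc f κ ℓ Z Uset N M (xcl t)) ∧
    Tendsto xcl atTop (nhds 0) ∧
    (∀ t, αlow ‖xcl t‖ ≤ max γ (Vbar / ε) * αup ‖x₀‖) := by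
  classical
  obtain ⟨hρI, hC1, hεpos, hA2'⟩ := hA2
  have hρ1 : ρ < 1 := hρI.2
  have hγpos : 0 < γ := lt_trans one_pos hγ1
  have hγm1 : 0 < γ - 1 := sub_pos.2 hγ1
  have hργpos : 0 < ργ := by rw [hργ]; exact div_pos hγm1 hγpos
  have hργ1 : ργ < 1 := by rw [hργ, div_lt_one hγpos]; linarith
  have hρMlt : ρ ^ M < 1 := pow_lt_one₀ hρpos.le hρ1 (by omega)
  have hρMpos : 0 < ρ ^ M := pow_pos hρpos M
  have h1ρM : 0 < 1 - ρ ^ M := sub_pos.2 hρMlt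
  have h1ρ : 0 < 1 - ρ := sub_pos.2 hρ1
  have hCpos : 0 < C := lt_of_lt_of_le one_pos hC1
  set θγ : ℝ := C ^ 2 * ρ ^ M / (1 - ρ ^ M) with hθγ
  have hθγpos : 0 < θγ := by
    apply div_pos _ h1ρM
    positivity
  set L : ℝ := Real.log γ - Real.log (γ - 1) with hLdef
  have hL : 0 < L := by
    have := Real.log_lt_log hγm1 (by linarith : γ - 1 < γ)
    simp only [hLdef]; linarith
  have hγlowpos : 0 < γlow := by
    rw [hγlow]; exact lt_min hγpos (div_pos hVbar hεpos)
  have hmax0 : 0 ≤ max (Real.log γlow) (max (Real.log θγ) 0) :=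
    le_trans (le_max_right _ 0) (le_max_right _ _)
  have hNM0 : (N₀ : ℝ) ≤ NM := by
    rw [hNM]
    have : 0 ≤ max (Real.log γlow) (max (Real.log θγ) 0) / L := div_nonneg hmax0 hL.le
    linarith
  have hN₀ltN : N₀ < N := by
    have : (N₀ : ℝ) < (N : ℝ) := lt_of_le_of_lt hNM0 hN
    exact_mod_cast this
  have hN1pos : 0 < N := Nat.pos_of_ne_zero (by omega)
  have hcastNN₀ : ((N - N₀ : ℕ) : ℝ) = (N : ℝ) - (N₀ : ℝ) := by
    rw [Nat.cast_sub hN₀ltN.le]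
  have hgtmax : max (Real.log γlow) (max (Real.log θγ) 0) < ((N - N₀ : ℕ) : ℝ) * L := by
    rw [hcastNN₀]
    have h1 : max (Real.log γlow) (max (Real.log θγ) 0) / L < (N : ℝ) - (N₀ : ℝ) := by
      rw [hNM] at hN; linarith
    calc max (Real.log γlow) (max (Real.log θγ) 0)
        = max (Real.log γlow) (max (Real.log θγ) 0) / L * L := by field_simp
      _ < ((N : ℝ) - (N₀ : ℝ)) * L := by
          exact mul_lt_mul_of_pos_right h1 hL
  have hlogργ : Real.log ργ = -L := by
    rw [hργ, Real.log_div (ne_of_gt hγm1) (ne_of_gt hγpos), hLdef]; ring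
  have hpowlt : ∀ a : ℝ, 0 < a → Real.log a < ((N - N₀ : ℕ) : ℝ) * L →
      a * ργ ^ (N - N₀) < 1 := by
    intro a ha hlt
    have h1 : 0 < a * ργ ^ (N - N₀) := mul_pos ha (pow_pos hργpos _)
    rw [← Real.log_neg_iff h1, Real.log_mul (ne_of_gt ha) (ne_of_gt (pow_pos hργpos _)),
      Real.log_pow, hlogργ]
    rw [mul_neg]
    linarith
  have hsmall1 : γlow * ργ ^ (N - N₀) < 1 :=
    hpowlt γlow hγlowpos (lt_of_le_of_lt (le_max_left _ _) hgtmax)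
  have hB1 : θγ * ργ ^ (N - N₀) < 1 :=
    hpowlt θγ hθγpos (lt_of_le_of_lt (le_trans (le_max_left _ 0) (le_max_right _ _)) hgtmax)
  set e : ℝ := 1 - θγ * ργ ^ (N - N₀) with hedef
  have hBnonneg : 0 ≤ θγ * ργ ^ (N - N₀) := mul_nonneg hθγpos.le (pow_nonneg hργpos.le _)
  have he0 : 0 < e := by simp only [hedef]; linarith
  have he1 : e ≤ 1 := by simp only [hedef]; linarith
  -- basic lmin facts
  have hlmin_nonneg : ∀ y : Vec n, 0 ≤ lmin ℓ Uset y := by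
    intro y
    apply Real.sInf_nonneg
    rintro z ⟨u', -, rfl⟩
    exact hℓ0 _ _
  have hlmin_le : ∀ (y : Vec n) (u' : Vec m), u' ∈ Uset → lmin ℓ Uset y ≤ ℓ y u' := by
    intro y u' hu'
    exact csInf_le ⟨0, by rintro z ⟨w, -, rfl⟩; exact hℓ0 _ _⟩ ⟨u', hu', rfl⟩
  have hγlowε : γlow * ε = min (γ * ε) Vbar := by
    rw [hγlow, min_mul_of_nonneg _ _ hεpos.le, div_mul_cancel₀ _ (ne_of_gt hεpos)]
  -- geometric sum bounds
  have hgeom_le : ∀ L' : ℕ, ∑ j ∈ Finset.range L', ρ ^ j ≤ 1 / (1 - ρ) := by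
    intro L'
    rw [le_div_iff₀ h1ρ]
    have hgs := geom_sum_mul ρ L'
    have hpow : 0 ≤ ρ ^ L' := pow_nonneg hρpos.le _
    have h2 : (∑ j ∈ Finset.range L', ρ ^ j) * (1 - ρ) = 1 - ρ ^ L' := by
      linear_combination -hgs
    linarith
  have hgeomM : ∑ j ∈ Finset.range M, ρ ^ j = (1 - ρ ^ M) / (1 - ρ) := by
    rw [geom_sum_eq (ne_of_lt hρ1) M, div_eq_div_iff (by linarith) (by linarith)]
    ring
  -- cost of the κ-loop
  have hkappaSum : ∀ y : Vec n, lmin ℓ Uset y ≤ ε → ∀ L' : ℕ,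
      ∑ j ∈ Finset.range L', ℓ (phiX f κ y j) (κ (phiX f κ y j)) ≤ γ * lmin ℓ Uset y := by
    intro y hy L'
    have h1 : ∑ j ∈ Finset.range L', ℓ (phiX f κ y j) (κ (phiX f κ y j))
        ≤ ∑ j ∈ Finset.range L', C * ρ ^ j * lmin ℓ Uset y :=
      Finset.sum_le_sum fun j _ => (hA2' y hy j).1
    have h2 : ∑ j ∈ Finset.range L', C * ρ ^ j * lmin ℓ Uset y
        = C * lmin ℓ Uset y * ∑ j ∈ Finset.range L', ρ ^ j := by
      rw [Finset.mul_sum]; apply Finset.sum_congr rfl; intro j _; ring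
    have h3 : C * lmin ℓ Uset y * ∑ j ∈ Finset.range L', ρ ^ j
        ≤ C * lmin ℓ Uset y * (1 / (1 - ρ)) :=
      mul_le_mul_of_nonneg_left (hgeom_le L') (mul_nonneg hCpos.le (hlmin_nonneg y))
    have h4 : C * lmin ℓ Uset y * (1 / (1 - ρ)) = γ * lmin ℓ Uset y := by
      rw [hγ]; field_simp
    linarith
  -- the splicing upper bound
  have hsplice : ∀ (x : Vec n) (u : ℕ → Vec m) (k : ℕ), k ≤ N →
      (∀ j < k, u j ∈ Uset ∧ (traj f x u j, u j) ∈ Z) →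
      lmin ℓ Uset (traj f x u k) ≤ ε →
      Vmpc f κ ℓ Z Uset N M x ≤
        ENNReal.ofReal ((∑ j ∈ Finset.range k, ℓ (traj f x u j) (u j)) +
          γ * lmin ℓ Uset (traj f x u k)) := by
    intro x u k hk hfeas hgood
    set y := traj f x u k with hy
    set v : ℕ → Vec m := fun j => if j < k then u j else κ (phiX f κ y (j - k)) with hv
    have htv1 : ∀ j, j ≤ k → traj f x v j = traj f x u j := by
      intro j
      induction j with
      | zero => intro _; rfl
      | succ i ih =>
        intro hik
        have hi : i < k := by omega
        show f (traj f x v i) (v i) = f (traj f x u i) (u i)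
        rw [ih (by omega)]
        simp only [hv, if_pos hi]
    have htv2 : ∀ d, traj f x v (k + d) = phiX f κ y d := by
      intro d
      induction d with
      | zero => exact htv1 k le_rfl
      | succ i ih =>
        show f (traj f x v (k + i)) (v (k + i)) = f (phiX f κ y i) (κ (phiX f κ y i))
        rw [ih]
        have hni : ¬ (k + i < k) := by omega
        have hsub : k + i - k = i := by omega
        simp only [hv, if_neg hni, hsub]
    have hfv : Feasible f Z Uset N x v := by
      intro j hjN
      by_cases hjk : j < k
      · have h := hfeas j hjk
        rw [htv1 j hjk.le]
        simpa only [hv, if_pos hjk] using h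
      · push_neg at hjk
        have hj' : j = k + (j - k) := by omega
        have htr : traj f x v j = phiX f κ y (j - k) := by
          have h2 := htv2 (j - k)
          rwa [← hj'] at h2
        have hvj : v j = κ (phiX f κ y (j - k)) := by
          simp only [hv, if_neg (by omega : ¬ j < k)]
        rw [htr, hvj]
        exact ⟨hκU _, (hA2' y hgood (j - k)).2⟩
    have htrajN : traj f x v N = phiX f κ y (N - k) := by
      have h := htv2 (N - k)
      rwa [Nat.add_sub_cancel' hk] at h
    have hcondv : ∀ i < M, (phiX f κ (traj f x v N) i,
        κ (phiX f κ (traj f x v N) i)) ∈ Z := by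
      rw [htrajN]
      intro i _
      rw [← phiX_add]
      exact (hA2' y hgood _).2
    refine le_trans (iInf₂_le v hfv) ?_
    have hJ : Jcost f κ ℓ Z N M x v =
        ENNReal.ofReal ((∑ j ∈ Finset.range N, ℓ (traj f x v j) (v j)) +
          ∑ i ∈ Finset.range M, ℓ (phiX f κ (traj f x v N) i)
            (κ (phiX f κ (traj f x v N) i))) := by
      simp only [Jcost, Vtail, if_pos hcondv]
      rw [← ENNReal.ofReal_add (Finset.sum_nonneg fun j _ => hℓ0 _ _)
        (Finset.sum_nonneg fun i _ => hℓ0 _ _)]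
    rw [hJ]
    apply ENNReal.ofReal_le_ofReal
    have hsum1 : ∑ j ∈ Finset.range N, ℓ (traj f x v j) (v j)
        = (∑ j ∈ Finset.range k, ℓ (traj f x u j) (u j)) +
          ∑ d ∈ Finset.range (N - k), ℓ (phiX f κ y d) (κ (phiX f κ y d)) := by
      obtain ⟨d0, hd0⟩ : ∃ d0, N = k + d0 := ⟨N - k, by omega⟩
      rw [hd0, Nat.add_sub_cancel_left, Finset.sum_range_add]
      congr 1
      · apply Finset.sum_congr rfl
        intro j hj
        have hjk : j < k := Finset.mem_range.1 hj
        rw [htv1 j hjk.le]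
        simp only [hv, if_pos hjk]
      · apply Finset.sum_congr rfl
        intro d hd
        have hni : ¬ (k + d < k) := by omega
        have hsub : k + d - k = d := by omega
        rw [htv2 d]
        simp only [hv, if_neg hni, hsub]
    have hsum2 : ∑ i ∈ Finset.range M, ℓ (phiX f κ (traj f x v N) i)
          (κ (phiX f κ (traj f x v N) i))
        = ∑ i ∈ Finset.range M, ℓ (phiX f κ y (N - k + i)) (κ (phiX f κ y (N - k + i))) := by
      apply Finset.sum_congr rfl
      intro i _
      rw [htrajN, ← phiX_add]
    rw [hsum1, hsum2, add_assoc, ← Finset.sum_range_add]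
    exact add_le_add_right (hkappaSum y hgood ((N - k) + M)) _

  -- the main one-step estimate
  have hstepMain : ∀ (x : Vec n) (u : ℕ → Vec m), IsMinimizer f κ ℓ Z Uset N M x u →
      Vmpc f κ ℓ Z Uset N M x ≤ ENNReal.ofReal Vbar →
      (Vmpc f κ ℓ Z Uset N M (f x (u 0)) + ENNReal.ofReal (e * ℓ x (u 0))
          ≤ Vmpc f κ ℓ Z Uset N M x) ∧
        ENNReal.ofReal (lmin ℓ Uset x) ≤ Vmpc f κ ℓ Z Uset N M x ∧
        ENNReal.ofReal (ℓ x (u 0)) ≤ Vmpc f κ ℓ Z Uset N M x := by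
    intro x u hmin hxV
    obtain ⟨hfeas, hVeq⟩ := hmin
    set xs := traj f x u with hxs
    have hJne : Jcost f κ ℓ Z N M x u ≠ ⊤ := by
      rw [← hVeq]
      exact ne_top_of_le_ne_top ENNReal.ofReal_ne_top hxV
    have hcond : ∀ i < M, (phiX f κ (xs N) i, κ (phiX f κ (xs N) i)) ∈ Z := by
      by_contra hc
      apply hJne
      simp only [Jcost, Vtail, ← hxs, if_neg hc, add_top]
    set S : ℕ → ℝ := fun k => ∑ j ∈ Finset.range k, ℓ (xs j) (u j) with hSdef
    set T : ℝ := ∑ i ∈ Finset.range M, ℓ (phiX f κ (xs N) i) (κ (phiX f κ (xs N) i)) with hTdef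
    have hSnonneg : ∀ k, 0 ≤ S k := fun k => Finset.sum_nonneg fun j _ => hℓ0 _ _
    have hTnonneg : 0 ≤ T := Finset.sum_nonneg fun i _ => hℓ0 _ _
    have hV : Vmpc f κ ℓ Z Uset N M x = ENNReal.ofReal (S N + T) := by
      rw [hVeq]
      simp only [Jcost, Vtail, ← hxs, if_pos hcond]
      rw [← ENNReal.ofReal_add (hSnonneg N) hTnonneg]
    have hSNT : S N + T ≤ Vbar := by
      rw [hV] at hxV
      exact (ENNReal.ofReal_le_ofReal_iff hVbar.le).1 hxV
    set W : ℕ → ℝ := fun k => S N + T - S k with hWdef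
    have hWsucc : ∀ k, W (k + 1) = W k - ℓ (xs k) (u k) := by
      intro k
      simp only [hWdef, hSdef, Finset.sum_range_succ]
      ring
    have hSmono : ∀ j k', j ≤ k' → S j ≤ S k' := by
      intro j k' hjk
      apply Finset.sum_le_sum_of_subset_of_nonneg (Finset.range_subset_range.2 hjk)
      intro i _ _
      exact hℓ0 _ _
    have hWanti : ∀ j k', j ≤ k' → W k' ≤ W j := by
      intro j k' hjk
      have := hSmono j k' hjk
      simp only [hWdef]
      linarith
    have hW0 : W 0 = S N + T := by simp [hWdef, hSdef]
    have hWN : W N = T := by simp [hWdef]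
    have hWnn : ∀ k ≤ N, 0 ≤ W k := by
      intro k hk
      have := hSmono k N hk
      simp only [hWdef]
      linarith
    have hℓk_ge : ∀ k, k < N → lmin ℓ Uset (xs k) ≤ ℓ (xs k) (u k) :=
      fun k hk => hlmin_le _ _ (hfeas k hk).1
    have hgoodW : ∀ k, k ≤ N → lmin ℓ Uset (xs k) ≤ ε →
        W k ≤ γ * lmin ℓ Uset (xs k) := by
      intro k hk hg
      have h := hsplice x u k hk (fun j hj => hfeas j (lt_of_lt_of_le hj hk)) hg
      rw [hV] at h
      have h2 := (ENNReal.ofReal_le_ofReal_iff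
        (add_nonneg (hSnonneg k) (mul_nonneg hγpos.le (hlmin_nonneg _)))).1 h
      simp only [hWdef]
      linarith
    have hbadW : ∀ k, k < N → ε < lmin ℓ Uset (xs k) → W (k + 1) ≤ W k - ε := by
      intro k hk hb
      have h1 := hℓk_ge k hk
      rw [hWsucc k]
      linarith
    have hWN₀ : W N₀ ≤ γlow * ε := by
      rw [hγlowε]
      by_cases hex : ∃ j, j < N₀ ∧ lmin ℓ Uset (xs j) ≤ ε
      · obtain ⟨j, hj, hgj⟩ := hex
        have hjN : j ≤ N := le_of_lt (lt_trans hj hN₀ltN)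
        have h1 : W N₀ ≤ W j := hWanti j N₀ hj.le
        have h2 : W j ≤ γ * lmin ℓ Uset (xs j) := hgoodW j hjN hgj
        have h3 : W j ≤ W 0 := hWanti 0 j (Nat.zero_le j)
        have h4 : γ * lmin ℓ Uset (xs j) ≤ γ * ε := mul_le_mul_of_nonneg_left hgj hγpos.le
        refine le_min (by linarith) ?_
        rw [hW0] at h3
        linarith
      · push_neg at hex
        have hiter : ∀ k', k' ≤ N₀ → W k' ≤ W 0 - k' * ε := by
          intro k'
          induction k' with
          | zero => intro _; simp
          | succ i ih =>
            intro hik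
            have h1 := hbadW i (by omega) (hex i (by omega))
            have h2 := ih (by omega)
            push_cast
            linarith
        have h := hiter N₀ le_rfl
        have hceil : (Vbar - γ * ε) / ε ≤ (N₀ : ℝ) := by
          rw [hN₀]
          exact le_trans (le_max_right _ _) (Nat.le_ceil _)
        have hceil2 : Vbar - γ * ε ≤ (N₀ : ℝ) * ε := by
          rw [div_le_iff₀ hεpos] at hceil
          linarith
        have h3 : W 0 ≤ Vbar := by rw [hW0]; exact hSNT
        have h4 : (0:ℝ) ≤ (N₀ : ℝ) * ε := mul_nonneg (Nat.cast_nonneg _) hεpos.le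
        exact le_min (by linarith) (by linarith)
    have hchain : ∀ Q : ℝ, 0 ≤ Q → W N₀ ≤ Q → Q ≤ γ * ε →
        ∀ d, N₀ + d ≤ N → W (N₀ + d) ≤ ργ ^ d * Q := by
      intro Q hQ0 hQ hQγ d
      induction d with
      | zero => intro _; simpa using hQ
      | succ i ih =>
        intro hle
        have hkN' : N₀ + i < N := by omega
        have hWi := ih (by omega)
        have hpow1 : ργ ^ i ≤ 1 := pow_le_one₀ hργpos.le hργ1.le
        have hpownn : 0 ≤ ργ ^ i := pow_nonneg hργpos.le i
        by_cases hg : lmin ℓ Uset (xs (N₀ + i)) ≤ ε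
        · have h1 : W (N₀ + i) ≤ γ * ℓ (xs (N₀ + i)) (u (N₀ + i)) :=
            le_trans (hgoodW _ (le_of_lt hkN') hg)
              (mul_le_mul_of_nonneg_left (hℓk_ge _ hkN') hγpos.le)
          have h3 : W (N₀ + i + 1) ≤ ργ * W (N₀ + i) := by
            rw [hWsucc, hργ, div_mul_eq_mul_div, le_div_iff₀ hγpos]
            linarith [h1]
          calc W (N₀ + (i + 1)) = W (N₀ + i + 1) := by ring_nf
            _ ≤ ργ * W (N₀ + i) := h3
            _ ≤ ργ * (ργ ^ i * Q) := mul_le_mul_of_nonneg_left hWi hργpos.le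
            _ = ργ ^ (i + 1) * Q := by ring
        · push_neg at hg
          have h2 := hbadW _ hkN' hg
          have hkey : ργ ^ i * Q * (1 - ργ) ≤ ε := by
            have h1ργ : 1 - ργ = 1 / γ := by
              rw [hργ]
              field_simp
              ring
            rw [h1ργ, mul_one_div, div_le_iff₀ hγpos]
            have h5 : ργ ^ i * Q ≤ Q := mul_le_of_le_one_left hQ0 hpow1
            have h6 : γ * ε = ε * γ := by ring
            linarith
          calc W (N₀ + (i + 1)) = W (N₀ + i + 1) := by ring_nf
            _ ≤ W (N₀ + i) - ε := h2
            _ ≤ ργ ^ i * Q - ε := by linarith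
            _ ≤ ργ ^ (i + 1) * Q := by
                have hexp : ργ ^ (i + 1) * Q = ργ ^ i * Q - ργ ^ i * Q * (1 - ργ) := by ring
                linarith
    have hWval : ∀ Q : ℝ, 0 ≤ Q → W N₀ ≤ Q → Q ≤ γ * ε → T ≤ ργ ^ (N - N₀) * Q := by
      intro Q h1 h2 h3
      have h := hchain Q h1 h2 h3 (N - N₀) (by omega)
      rwa [Nat.add_sub_cancel' hN₀ltN.le, hWN] at h
    have hγlowγε : γlow * ε ≤ γ * ε := by
      have : γlow ≤ γ := by rw [hγlow]; exact min_le_left _ _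
      exact mul_le_mul_of_nonneg_right this hεpos.le
    have hγlowεnn : 0 ≤ γlow * ε := mul_nonneg hγlowpos.le hεpos.le
    have hTγlow : T ≤ ργ ^ (N - N₀) * (γlow * ε) := hWval _ hγlowεnn hWN₀ hγlowγε
    have hpowργnn : 0 ≤ ργ ^ (N - N₀) := pow_nonneg hργpos.le _
    have hpowργ1 : ργ ^ (N - N₀) ≤ 1 := pow_le_one₀ hργpos.le hργ1.le
    have hTε : T ≤ ε := by
      have h1 : ργ ^ (N - N₀) * (γlow * ε) = γlow * ργ ^ (N - N₀) * ε := by ring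
      have h2 : γlow * ργ ^ (N - N₀) * ε ≤ 1 * ε := mul_le_mul_of_nonneg_right hsmall1.le hεpos.le
      linarith
    have hterm : ∀ j, j < M → ℓ (phiX f κ (xs N) j) (κ (phiX f κ (xs N) j)) ≤ T := by
      intro j hj
      exact Finset.single_le_sum
        (f := fun i => ℓ (phiX f κ (xs N) i) (κ (phiX f κ (xs N) i)))
        (fun i _ => hℓ0 _ _) (Finset.mem_range.2 hj)
    have hgoodN : lmin ℓ Uset (xs N) ≤ ε := by
      have h0 := hterm 0 (by omega)
      have h1 : lmin ℓ Uset (xs N) ≤ ℓ (phiX f κ (xs N) 0) (κ (phiX f κ (xs N) 0)) :=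
        hlmin_le _ _ (hκU _)
      linarith
    have hgoodj : ∀ j, j < M → lmin ℓ Uset (phiX f κ (xs N) j) ≤ ε := by
      intro j hj
      have h1 : lmin ℓ Uset (phiX f κ (xs N) j)
          ≤ ℓ (phiX f κ (xs N) j) (κ (phiX f κ (xs N) j)) := hlmin_le _ _ (hκU _)
      have h2 := hterm j hj
      linarith
    set δ : ℝ := ℓ (phiX f κ (xs N) M) (κ (phiX f κ (xs N) M)) with hδdef
    have hδnn : 0 ≤ δ := hℓ0 _ _
    have hδj : ∀ j, j < M → δ * ρ ^ j ≤
        C * ρ ^ M * ℓ (phiX f κ (xs N) j) (κ (phiX f κ (xs N) j)) := by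
      intro j hj
      have h := (hA2' (phiX f κ (xs N) j) (hgoodj j hj) (M - j)).1
      rw [← phiX_add, Nat.add_sub_cancel' hj.le] at h
      have h2 : lmin ℓ Uset (phiX f κ (xs N) j)
          ≤ ℓ (phiX f κ (xs N) j) (κ (phiX f κ (xs N) j)) := hlmin_le _ _ (hκU _)
      have h3 : δ ≤ C * ρ ^ (M - j) * ℓ (phiX f κ (xs N) j) (κ (phiX f κ (xs N) j)) := by
        refine le_trans h ?_
        exact mul_le_mul_of_nonneg_left h2 (mul_nonneg hCpos.le (pow_nonneg hρpos.le _))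
      have h4 := mul_le_mul_of_nonneg_right h3 (pow_nonneg hρpos.le j : (0:ℝ) ≤ ρ ^ j)
      have h5 : C * ρ ^ (M - j) * ℓ (phiX f κ (xs N) j) (κ (phiX f κ (xs N) j)) * ρ ^ j
          = C * ρ ^ M * ℓ (phiX f κ (xs N) j) (κ (phiX f κ (xs N) j)) := by
        rw [show C * ρ ^ (M - j) * ℓ (phiX f κ (xs N) j) (κ (phiX f κ (xs N) j)) * ρ ^ j
            = C * (ρ ^ (M - j) * ρ ^ j) * ℓ (phiX f κ (xs N) j) (κ (phiX f κ (xs N) j))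
          from by ring, ← pow_add, Nat.sub_add_cancel hj.le]
      linarith
    have hδT : δ * ((1 - ρ ^ M) / (1 - ρ)) ≤ C * ρ ^ M * T := by
      have hsum := Finset.sum_le_sum (fun j hj => hδj j (Finset.mem_range.1 hj))
      rw [← Finset.mul_sum, ← Finset.mul_sum, hgeomM] at hsum
      simpa only [hTdef] using hsum
    -- the unified tail bound  T ≤ ργ^(N-N₀) * (γ * ℓ x (u 0))
    have hx0 : xs 0 = x := rfl
    have hℓ₀lm : lmin ℓ Uset x ≤ ℓ x (u 0) := by
      have := hℓk_ge 0 hN1pos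
      rwa [hx0] at this
    have hℓ₀nn : 0 ≤ ℓ x (u 0) := hℓ0 _ _
    have hTfin : T ≤ ργ ^ (N - N₀) * (γ * ℓ x (u 0)) := by
      rcases le_or_gt (lmin ℓ Uset x) ε with hg | hb
      · have hW0γ : W 0 ≤ γ * lmin ℓ Uset x := by
          have := hgoodW 0 (Nat.zero_le N) (by rwa [hx0])
          rwa [hx0] at this
        have hW0γε : W 0 ≤ γ * ε :=
          le_trans hW0γ (mul_le_mul_of_nonneg_left hg hγpos.le)
        have hT1 : T ≤ ργ ^ (N - N₀) * W 0 :=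
          hWval _ (hWnn 0 (Nat.zero_le N)) (hWanti 0 N₀ (Nat.zero_le N₀)) hW0γε
        have hT2 : W 0 ≤ γ * ℓ x (u 0) :=
          le_trans hW0γ (mul_le_mul_of_nonneg_left hℓ₀lm hγpos.le)
        exact le_trans hT1 (mul_le_mul_of_nonneg_left hT2 hpowργnn)
      · have hεℓ : ε ≤ ℓ x (u 0) := le_trans hb.le hℓ₀lm
        refine le_trans hTγlow (mul_le_mul_of_nonneg_left ?_ hpowργnn)
        calc γlow * ε ≤ γ * ε := hγlowγε
          _ ≤ γ * ℓ x (u 0) := mul_le_mul_of_nonneg_left hεℓ hγpos.le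
    have hδfin : δ ≤ (1 - e) * ℓ x (u 0) := by
      have h1e : 1 - e = θγ * ργ ^ (N - N₀) := by simp only [hedef]; ring
      set G : ℝ := (1 - ρ ^ M) / (1 - ρ) with hGdef
      have hGpos : 0 < G := div_pos h1ρM h1ρ
      have hne1 : (1 - ρ) ≠ 0 := ne_of_gt h1ρ
      have hne2 : (1 - ρ ^ M) ≠ 0 := ne_of_gt h1ρM
      have hmain : δ * G ≤ (θγ * ργ ^ (N - N₀) * ℓ x (u 0)) * G := by
        refine le_trans hδT ?_
        have hident : (θγ * ργ ^ (N - N₀) * ℓ x (u 0)) * G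
            = C * ρ ^ M * (ργ ^ (N - N₀) * (γ * ℓ x (u 0))) := by
          simp only [hGdef, hθγ, hγ]
          field_simp
        rw [hident]
        exact mul_le_mul_of_nonneg_left hTfin (mul_nonneg hCpos.le hρMpos.le)
      have hfin2 := le_of_mul_le_mul_right hmain hGpos
      rw [h1e]
      linarith
    -- the shifted candidate
    set x1 := f x (u 0) with hx1def
    set w : ℕ → Vec m := fun j => if j + 1 < N then u (j + 1)
      else κ (phiX f κ (xs N) (j + 1 - N)) with hwdef
    have htw : ∀ j, j < N → traj f x1 w j = xs (j + 1) := by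
      intro j
      induction j with
      | zero => intro _; rfl
      | succ i ih =>
        intro hi
        show f (traj f x1 w i) (w i) = xs (i + 2)
        rw [ih (by omega)]
        have hi1 : i + 1 < N := by omega
        simp only [hwdef, if_pos hi1]
        rfl
    have hNsub : N - 1 + 1 = N := by omega
    have hwN1 : w (N - 1) = κ (xs N) := by
      have hnl : ¬ (N - 1 + 1 < N) := by omega
      have hz : N - 1 + 1 - N = 0 := by omega
      simp only [hwdef, if_neg hnl, hz]
      rfl
    have htwN : traj f x1 w N = phiX f κ (xs N) 1 := by
      conv_lhs => rw [← hNsub]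
      show f (traj f x1 w (N - 1)) (w (N - 1)) = _
      rw [htw (N - 1) (by omega), hNsub, hwN1]
      rfl
    have hfw : Feasible f Z Uset N x1 w := by
      intro j hj
      by_cases hj1 : j + 1 < N
      · have h := hfeas (j + 1) hj1
        rw [htw j hj]
        simpa only [hwdef, if_pos hj1] using h
      · have hjN : j + 1 = N := by omega
        have hwj : w j = κ (xs N) := by
          have hz : j + 1 - N = 0 := by omega
          simp only [hwdef, if_neg hj1, hz]
          rfl
        rw [htw j hj, hjN, hwj]
        refine ⟨hκU _, ?_⟩
        have := (hA2' (xs N) hgoodN 0).2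
        exact this
    have hcond1 : ∀ i < M, (phiX f κ (traj f x1 w N) i,
        κ (phiX f κ (traj f x1 w N) i)) ∈ Z := by
      rw [htwN]
      intro i _
      rw [← phiX_add]
      exact (hA2' (xs N) hgoodN _).2
    have hstage : ∑ j ∈ Finset.range N, ℓ (traj f x1 w j) (w j)
        = (S N - ℓ x (u 0)) + ℓ (xs N) (κ (xs N)) := by
      have hsplit : ∑ j ∈ Finset.range N, ℓ (traj f x1 w j) (w j)
          = (∑ j ∈ Finset.range (N - 1), ℓ (traj f x1 w j) (w j))
            + ℓ (traj f x1 w (N - 1)) (w (N - 1)) := by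
        conv_lhs => rw [← hNsub]
        rw [Finset.sum_range_succ]
      have hsum1 : ∑ j ∈ Finset.range (N - 1), ℓ (traj f x1 w j) (w j)
          = ∑ j ∈ Finset.range (N - 1), ℓ (xs (j + 1)) (u (j + 1)) := by
        apply Finset.sum_congr rfl
        intro j hj
        have hj1 : j + 1 < N := by
          have := Finset.mem_range.1 hj
          omega
        rw [htw j (by omega)]
        simp only [hwdef, if_pos hj1]
      have hS : S N = ℓ x (u 0) + ∑ j ∈ Finset.range (N - 1), ℓ (xs (j + 1)) (u (j + 1)) := by
        simp only [hSdef]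
        conv_lhs => rw [← hNsub]
        rw [Finset.sum_range_succ', hx0]
        ring
      rw [hsplit, hsum1, htw (N - 1) (by omega), hNsub, hwN1, hS]
      ring
    have htail : ∑ i ∈ Finset.range M, ℓ (phiX f κ (traj f x1 w N) i)
          (κ (phiX f κ (traj f x1 w N) i))
        = T + δ - ℓ (xs N) (κ (xs N)) := by
      have h1 : ∑ i ∈ Finset.range M, ℓ (phiX f κ (traj f x1 w N) i)
            (κ (phiX f κ (traj f x1 w N) i))
          = ∑ i ∈ Finset.range M, ℓ (phiX f κ (xs N) (i + 1))
            (κ (phiX f κ (xs N) (i + 1))) := by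
        apply Finset.sum_congr rfl
        intro i _
        rw [htwN, show phiX f κ (phiX f κ (xs N) 1) i = phiX f κ (xs N) (i + 1) from by
          rw [← phiX_add, Nat.add_comm]]
      have h2 : ∑ i ∈ Finset.range (M + 1), ℓ (phiX f κ (xs N) i) (κ (phiX f κ (xs N) i))
          = T + δ := by
        rw [Finset.sum_range_succ]
      have h3 : ∑ i ∈ Finset.range (M + 1), ℓ (phiX f κ (xs N) i) (κ (phiX f κ (xs N) i))
          = (∑ i ∈ Finset.range M, ℓ (phiX f κ (xs N) (i + 1)) (κ (phiX f κ (xs N) (i + 1))))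
            + ℓ (phiX f κ (xs N) 0) (κ (phiX f κ (xs N) 0)) :=
        Finset.sum_range_succ' _ M
      have h0 : phiX f κ (xs N) 0 = xs N := rfl
      rw [h0] at h3
      rw [h1]
      linarith
    have hJw : Jcost f κ ℓ Z N M x1 w
        = ENNReal.ofReal (((S N - ℓ x (u 0)) + ℓ (xs N) (κ (xs N)))
            + (T + δ - ℓ (xs N) (κ (xs N)))) := by
      have hℓ₀S : ℓ x (u 0) ≤ S N := by
        have h : ℓ (xs 0) (u 0) ≤ ∑ j ∈ Finset.range N, ℓ (xs j) (u j) :=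
          Finset.single_le_sum (f := fun j => ℓ (xs j) (u j))
            (fun i _ => hℓ0 _ _) (Finset.mem_range.2 hN1pos)
        rw [hx0] at h
        exact h
      have hnn1 : 0 ≤ (S N - ℓ x (u 0)) + ℓ (xs N) (κ (xs N)) := by
        have := hℓ0 (xs N) (κ (xs N))
        linarith
      have hnn2 : 0 ≤ T + δ - ℓ (xs N) (κ (xs N)) := by
        have := hterm 0 (by omega)
        have h0 : phiX f κ (xs N) 0 = xs N := rfl
        rw [h0] at this
        linarith
      simp only [Jcost, Vtail, if_pos hcond1]
      rw [hstage, htail, ← ENNReal.ofReal_add hnn1 hnn2]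
    have hℓ₀S : ℓ x (u 0) ≤ S N := by
      have h : ℓ (xs 0) (u 0) ≤ ∑ j ∈ Finset.range N, ℓ (xs j) (u j) :=
        Finset.single_le_sum (f := fun j => ℓ (xs j) (u j))
          (fun i _ => hℓ0 _ _) (Finset.mem_range.2 hN1pos)
      rw [hx0] at h
      exact h
    have hVx1 : Vmpc f κ ℓ Z Uset N M x1 ≤
        ENNReal.ofReal (((S N - ℓ x (u 0)) + ℓ (xs N) (κ (xs N)))
          + (T + δ - ℓ (xs N) (κ (xs N)))) :=
      le_trans (iInf₂_le w hfw) (le_of_eq hJw)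
    have hbignn : 0 ≤ ((S N - ℓ x (u 0)) + ℓ (xs N) (κ (xs N)))
        + (T + δ - ℓ (xs N) (κ (xs N))) := by
      have h1 := hterm 0 (by omega)
      have h0 : phiX f κ (xs N) 0 = xs N := rfl
      rw [h0] at h1
      have := hℓ0 (xs N) (κ (xs N))
      linarith
    refine ⟨?_, ?_, ?_⟩
    · have harith : (((S N - ℓ x (u 0)) + ℓ (xs N) (κ (xs N)))
          + (T + δ - ℓ (xs N) (κ (xs N)))) + e * ℓ x (u 0) ≤ S N + T := by
        have h1 : (1 - e) * ℓ x (u 0) = ℓ x (u 0) - e * ℓ x (u 0) := by ring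
        rw [h1] at hδfin
        linarith
      calc Vmpc f κ ℓ Z Uset N M x1 + ENNReal.ofReal (e * ℓ x (u 0))
          ≤ ENNReal.ofReal (((S N - ℓ x (u 0)) + ℓ (xs N) (κ (xs N)))
              + (T + δ - ℓ (xs N) (κ (xs N)))) + ENNReal.ofReal (e * ℓ x (u 0)) :=
            add_le_add_left hVx1 _
        _ = ENNReal.ofReal ((((S N - ℓ x (u 0)) + ℓ (xs N) (κ (xs N)))
              + (T + δ - ℓ (xs N) (κ (xs N)))) + e * ℓ x (u 0)) :=
            (ENNReal.ofReal_add hbignn (mul_nonneg he0.le hℓ₀nn)).symm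
        _ ≤ ENNReal.ofReal (S N + T) := ENNReal.ofReal_le_ofReal harith
        _ = Vmpc f κ ℓ Z Uset N M x := hV.symm
    · rw [hV]
      apply ENNReal.ofReal_le_ofReal
      have := hlmin_le x (u 0) (hfeas 0 hN1pos).1
      linarith
    · rw [hV]
      apply ENNReal.ofReal_le_ofReal
      linarith

  -- closed-loop invariance
  have hVt : ∀ t, Vmpc f κ ℓ Z Uset N M (xcl t) ≤ ENNReal.ofReal Vbar := by
    intro t
    induction t with
    | zero => rw [hinit]; exact hx₀
    | succ s ih =>
      have h := (hstepMain (xcl s) (ustar s) (hopt s) ih).1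
      rw [hstep s]
      exact le_trans (le_trans (le_add_right le_rfl) h) ih
  have hfin : ∀ t, Vmpc f κ ℓ Z Uset N M (xcl t) ≠ ⊤ :=
    fun t => ne_top_of_le_ne_top ENNReal.ofReal_ne_top (hVt t)
  have hdec : ∀ t, Vmpc f κ ℓ Z Uset N M (xcl (t + 1)) +
      ENNReal.ofReal (e * ℓ (xcl t) (ustar t 0)) ≤ Vmpc f κ ℓ Z Uset N M (xcl t) := by
    intro t
    rw [hstep t]
    exact (hstepMain _ _ (hopt t) (hVt t)).1
  have hmono : Antitone fun t => Vmpc f κ ℓ Z Uset N M (xcl t) :=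
    antitone_nat_of_succ_le fun t => le_trans (le_add_right le_rfl) (hdec t)
  -- real-valued value function along the loop
  set a : ℕ → ℝ := fun t => (Vmpc f κ ℓ Z Uset N M (xcl t)).toReal with hadef
  have hℓcl_nonneg : ∀ t, 0 ≤ e * ℓ (xcl t) (ustar t 0) :=
    fun t => mul_nonneg he0.le (hℓ0 _ _)
  have hareal : ∀ t, a (t + 1) + e * ℓ (xcl t) (ustar t 0) ≤ a t := by
    intro t
    have h := ENNReal.toReal_mono (hfin t) (hdec t)
    rw [ENNReal.toReal_add (hfin (t + 1)) ENNReal.ofReal_ne_top,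
      ENNReal.toReal_ofReal (hℓcl_nonneg t)] at h
    exact h
  have hanonneg : ∀ t, 0 ≤ a t := fun t => ENNReal.toReal_nonneg
  have ha_anti : Antitone a := antitone_nat_of_succ_le fun t => by
    have := hareal t; have := hℓcl_nonneg t; linarith
  have hsumbd : ∀ T', ∑ t ∈ Finset.range T', e * ℓ (xcl t) (ustar t 0) ≤ a 0 := by
    intro T'
    have key : ∀ T', ∑ t ∈ Finset.range T', e * ℓ (xcl t) (ustar t 0) ≤ a 0 - a T' := by
      intro T'
      induction T' with
      | zero => simp
      | succ s ih =>
        rw [Finset.sum_range_succ]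
        have := hareal s
        linarith
    have := key T'
    have := hanonneg T'
    linarith
  have hsummable : Summable fun t => e * ℓ (xcl t) (ustar t 0) :=
    summable_of_sum_range_le hℓcl_nonneg hsumbd
  have hg0 : Tendsto (fun t => e * ℓ (xcl t) (ustar t 0)) atTop (nhds 0) :=
    hsummable.tendsto_atTop_zero
  have hℓ00' : Tendsto (fun t => ℓ (xcl t) (ustar t 0)) atTop (nhds 0) := by
    have h := hg0.div_const e
    simp only [zero_div] at h
    have : (fun t => e * ℓ (xcl t) (ustar t 0) / e) = fun t => ℓ (xcl t) (ustar t 0) := by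
      funext t; field_simp
    rwa [this] at h
  have hlmin_le_ℓ : ∀ t, lmin ℓ Uset (xcl t) ≤ ℓ (xcl t) (ustar t 0) :=
    fun t => hlmin_le _ _ ((hopt t).1 0 hN1pos).1
  have hαlow_nonneg : ∀ r : ℝ, 0 ≤ r → 0 ≤ αlow r := by
    intro r hr
    rw [← hαlow.2.2.1]
    exact hαlow.2.1.monotoneOn (Set.mem_Ici.2 le_rfl) (Set.mem_Ici.2 hr) hr
  have hα0 : Tendsto (fun t => αlow ‖xcl t‖) atTop (nhds 0) := by
    apply tendsto_of_tendsto_of_tendsto_of_le_of_le tendsto_const_nhds hℓ00'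
    · intro t; exact hαlow_nonneg _ (norm_nonneg _)
    · intro t; exact le_trans (hA1 (xcl t)).1 (hlmin_le_ℓ t)
  have htends : Tendsto xcl atTop (nhds 0) := by
    rw [tendsto_zero_iff_norm_tendsto_zero]
    rw [Metric.tendsto_atTop]
    intro δ hδ
    have hαδ : 0 < αlow δ := by
      rw [← hαlow.2.2.1]
      exact hαlow.2.1 (Set.mem_Ici.2 le_rfl) (Set.mem_Ici.2 hδ.le) hδ
    have hev := hα0.eventually_lt_const hαδ
    rw [eventually_atTop] at hev
    obtain ⟨T0, hT0⟩ := hev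
    refine ⟨T0, fun t ht => ?_⟩
    rw [Real.dist_eq, sub_zero, abs_of_nonneg (norm_nonneg _)]
    by_contra h'
    push_neg at h'
    have hmem1 : δ ∈ Set.Ici (0 : ℝ) := Set.mem_Ici.2 hδ.le
    have hmem2 : ‖xcl t‖ ∈ Set.Ici (0 : ℝ) := Set.mem_Ici.2 (norm_nonneg _)
    have := hαlow.2.1.monotoneOn hmem1 hmem2 h'
    exact absurd (hT0 t ht) (not_lt.2 this)
  refine ⟨fun t => ⟨lt_of_le_of_lt (hVt t) ENNReal.ofReal_lt_top, hVt t⟩,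
    fun t => ((hopt t).1 0 hN1pos).2, hmono, htends, ?_⟩
  -- the K-infinity bound
  intro t
  have h1 : αlow ‖xcl t‖ ≤ lmin ℓ Uset (xcl t) := (hA1 _).1
  have h2 : lmin ℓ Uset (xcl t) ≤ a t := by
    have h := (hstepMain _ _ (hopt t) (hVt t)).2.1
    have := ENNReal.toReal_mono (hfin t) h
    rwa [ENNReal.toReal_ofReal (hlmin_nonneg _)] at this
  have h3 : a t ≤ a 0 := ha_anti (Nat.zero_le t)
  have h4 : a 0 ≤ max γ (Vbar / ε) * αup ‖x₀‖ := by
    have hupnn : 0 ≤ αup ‖x₀‖ := le_trans (hlmin_nonneg x₀) (hA1 x₀).2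
    have ha0x : a 0 = (Vmpc f κ ℓ Z Uset N M x₀).toReal := by rw [hadef]; simp [hinit]
    rcases le_or_gt (lmin ℓ Uset x₀) ε with hc | hc
    · have hle := hsplice x₀ (fun _ => κ x₀) 0 (Nat.zero_le N) (by omega) hc
      simp only [Finset.range_zero, Finset.sum_empty, zero_add] at hle
      have := ENNReal.toReal_mono ENNReal.ofReal_ne_top hle
      rw [ENNReal.toReal_ofReal (mul_nonneg hγpos.le (hlmin_nonneg _))] at this
      rw [ha0x]
      calc (Vmpc f κ ℓ Z Uset N M x₀).toReal ≤ γ * lmin ℓ Uset x₀ := this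
        _ ≤ γ * αup ‖x₀‖ := mul_le_mul_of_nonneg_left (hA1 x₀).2 hγpos.le
        _ ≤ max γ (Vbar / ε) * αup ‖x₀‖ :=
            mul_le_mul_of_nonneg_right (le_max_left _ _) hupnn
    · have hV0 : a 0 ≤ Vbar := by
        rw [ha0x]
        have := ENNReal.toReal_mono ENNReal.ofReal_ne_top (hinit ▸ hVt 0)
        rwa [ENNReal.toReal_ofReal hVbar.le] at this
      have hVεpos : 0 < Vbar / ε := div_pos hVbar hεpos
      calc a 0 ≤ Vbar := hV0
        _ = Vbar / ε * ε := by field_simp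
        _ ≤ Vbar / ε * lmin ℓ Uset x₀ := mul_le_mul_of_nonneg_left hc.le hVεpos.le
        _ ≤ Vbar / ε * αup ‖x₀‖ := mul_le_mul_of_nonneg_left (hA1 x₀).2 hVεpos.le
        _ ≤ max γ (Vbar / ε) * αup ‖x₀‖ :=
            mul_le_mul_of_nonneg_right (le_max_right _ _) hupnn
  linarith
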